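/- Every finite simple graph has at most 2^k minimal vertex covers of size at most k. -/

import Mathlib

section Aux

variable {V : Type*} [Fintype V] [DecidableEq V]

/-- `X` is a vertex cover of `G`. -/
def covAux (G : SimpleGraph V) (X : Finset V) : Prop :=
  ∀ u v : V, G.Adj u v → u ∈ X ∨ v ∈ X

/-- The set of minimal vertex covers of size at most `k`. -/
def mvcAux (G : SimpleGraph V) (k : ℕ) : Set (Finset V) :=
  {X | X.card ≤ k ∧ covAux G X ∧ ∀ Y : Finset V, Y ⊂ X → ¬ covAux G Y}

/-- Delete all edges incident to `u`. -/
def delAux (G : SimpleGraph V) (u : V) : SimpleGraph V where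
  Adj a b := G.Adj a b ∧ a ≠ u ∧ b ≠ u
  symm := by constructor; rintro a b ⟨h, ha, hb⟩; exact ⟨h.symm, hb, ha⟩
  loopless := by constructor; rintro a ⟨h, _, _⟩; exact G.irrefl h

lemma erase_mem_mvcAux (G : SimpleGraph V) (u : V) (k : ℕ) {X : Finset V}
    (hX : X ∈ mvcAux G (k + 1)) (hu : u ∈ X) : X.erase u ∈ mvcAux (delAux G u) k := by
  obtain ⟨hcard, hc, hmin⟩ := hX
  refine ⟨?_, ?_, ?_⟩
  · have := Finset.card_erase_of_mem hu
    have := Finset.card_pos.2 ⟨u, hu⟩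
    omega
  · rintro a b ⟨hab, ha, hb⟩
    rcases hc a b hab with h | h
    · exact Or.inl (Finset.mem_erase.2 ⟨ha, h⟩)
    · exact Or.inr (Finset.mem_erase.2 ⟨hb, h⟩)
  · intro Y hY hcov
    refine hmin (insert u Y) ?_ ?_
    · constructor
      · intro x hx
        rcases Finset.mem_insert.1 hx with rfl | hx
        · exact hu
        · exact Finset.erase_subset u X (hY.subset hx)
      · intro hsub
        obtain ⟨x, hx1, hx2⟩ := Finset.exists_of_ssubset hY
        have hxX : x ∈ X := Finset.erase_subset u X hx1
        have hxu : x ≠ u := (Finset.mem_erase.1 hx1).1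
        rcases Finset.mem_insert.1 (hsub hxX) with h | h
        · exact hxu h
        · exact hx2 h
    · intro a b hab
      by_cases ha : a = u
      · exact Or.inl (Finset.mem_insert.2 (Or.inl ha))
      by_cases hb : b = u
      · exact Or.inr (Finset.mem_insert.2 (Or.inl hb))
      rcases hcov a b ⟨hab, ha, hb⟩ with h | h
      · exact Or.inl (Finset.mem_insert_of_mem h)
      · exact Or.inr (Finset.mem_insert_of_mem h)

lemma mvcAux_zero_or_edgeless (G : SimpleGraph V) (k : ℕ)
    (h : k = 0 ∨ ∀ a b : V, ¬ G.Adj a b) : (mvcAux G k).ncard ≤ 1 := by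
  have hsub : mvcAux G k ⊆ {(∅ : Finset V)} := by
    intro X ⟨hcard, hc, hmin⟩
    rcases h with rfl | h
    · simpa using Finset.card_eq_zero.1 (Nat.le_zero.1 hcard)
    · by_contra hne
      have hne' : X ≠ ∅ := by simpa using hne
      exact hmin ∅ (Finset.empty_ssubset.2 (Finset.nonempty_iff_ne_empty.2 hne')) (fun a b hab => absurd hab (h a b))
  calc (mvcAux G k).ncard ≤ ({(∅ : Finset V)} : Set (Finset V)).ncard :=
        Set.ncard_le_ncard hsub (Set.finite_singleton _)
    _ = 1 := Set.ncard_singleton _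

lemma mvcAux_vertex_le (G : SimpleGraph V) (k : ℕ) (u : V)
    (ih : ∀ G' : SimpleGraph V, (mvcAux G' k).ncard ≤ 2 ^ k) :
    (mvcAux G (k + 1) ∩ {X | u ∈ X}).ncard ≤ 2 ^ k := by
  have h1 : (mvcAux G (k + 1) ∩ {X | u ∈ X}).ncard ≤ (mvcAux (delAux G u) k).ncard := by
    apply Set.ncard_le_ncard_of_injOn (fun X => X.erase u)
    · rintro X ⟨hX, hu⟩
      exact erase_mem_mvcAux G u k hX hu
    · rintro X ⟨_, huX⟩ Y ⟨_, huY⟩ h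
      simp only at h
      have : insert u (X.erase u) = insert u (Y.erase u) := by rw [h]
      rwa [Finset.insert_erase huX, Finset.insert_erase huY] at this
  exact h1.trans (ih _)

lemma mvcAux_le (k : ℕ) : ∀ G : SimpleGraph V, (mvcAux G k).ncard ≤ 2 ^ k := by
  induction k with
  | zero => intro G; simpa using mvcAux_zero_or_edgeless G 0 (Or.inl rfl)
  | succ k ih =>
    intro G
    by_cases h : ∃ a b : V, G.Adj a b
    · obtain ⟨u, v, huv⟩ := h
      have hsub : mvcAux G (k + 1) ⊆
          (mvcAux G (k + 1) ∩ {X | u ∈ X}) ∪ (mvcAux G (k + 1) ∩ {X | v ∈ X}) := by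
        intro X hX
        rcases hX.2.1 u v huv with h | h
        · exact Or.inl ⟨hX, h⟩
        · exact Or.inr ⟨hX, h⟩
      calc (mvcAux G (k + 1)).ncard
          ≤ ((mvcAux G (k + 1) ∩ {X | u ∈ X}) ∪ (mvcAux G (k + 1) ∩ {X | v ∈ X})).ncard :=
            Set.ncard_le_ncard hsub (Set.toFinite _)
        _ ≤ (mvcAux G (k + 1) ∩ {X | u ∈ X}).ncard +
            (mvcAux G (k + 1) ∩ {X | v ∈ X}).ncard :=
            Set.ncard_union_le _ _
        _ ≤ 2 ^ k + 2 ^ k := Nat.add_le_add (mvcAux_vertex_le G k u ih) (mvcAux_vertex_le G k v ih)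
        _ = 2 ^ (k + 1) := by ring
    · push_neg at h
      calc (mvcAux G (k + 1)).ncard ≤ 1 := mvcAux_zero_or_edgeless G (k + 1) (Or.inr h)
        _ ≤ 2 ^ (k + 1) := Nat.one_le_two_pow

end Aux

/-- Every finite simple graph has at most `2 ^ k` minimal vertex covers of size at most `k`. -/
theorem stmt_3 {V : Type*} [Fintype V] [DecidableEq V] (G : SimpleGraph V) (k : ℕ) :
    Set.ncard {X : Finset V | X.card ≤ k ∧
      (∀ u v : V, G.Adj u v → u ∈ X ∨ v ∈ X) ∧
      (∀ Y : Finset V, Y ⊂ X → ¬ ∀ u v : V, G.Adj u v → u ∈ Y ∨ v ∈ Y)} ≤ 2 ^ k :=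
  mvcAux_le k G
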